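/- Let f : ℝ² → ℂ be twice continuously differentiable and nowhere vanishing, and suppose that f(x) f(y) = f(w) f(z) for every quadruple x, y, w, z ∈ ℝ² with x + y = w + z and |x|² + |y|² = |w|² + |z|². Then there exist a, c ∈ ℂ and b ∈ ℂ² such that f(x) = exp(a|x|² + b·x + c) for all x ∈ ℝ². -/

import Mathlib

noncomputable section

abbrev R2 := EuclideanSpace ℝ (Fin 2)

private def vv (a b : ℝ) : R2 := a • EuclideanSpace.single 0 1 + b • EuclideanSpace.single 1 1

private lemma vv_apply0 (a b : ℝ) : vv a b 0 = a := by
  simp [vv, EuclideanSpace.single_apply]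

private lemma vv_apply1 (a b : ℝ) : vv a b 1 = b := by
  simp [vv, EuclideanSpace.single_apply]

private lemma vadd (a b c d : ℝ) : vv a b + vv c d = vv (a+c) (b+d) := by
  simp only [vv, add_smul]; abel

private lemma normsq (x : R2) : ‖x‖^2 = x 0 ^ 2 + x 1 ^ 2 := by
  rw [EuclideanSpace.norm_eq, Real.sq_sqrt (by positivity)]
  simp [Fin.sum_univ_two, sq_abs]

private lemma vnorm (a b : ℝ) : ‖vv a b‖^2 = a^2 + b^2 := by
  rw [normsq, vv_apply0, vv_apply1]

private lemma vvx (x : R2) : vv (x 0) (x 1) = x := by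
  ext i
  fin_cases i
  · exact vv_apply0 _ _
  · exact vv_apply1 _ _

private lemma vv_zero : vv 0 0 = 0 := by simp [vv]

private lemma vv_smul (t : ℝ) : vv t 0 = t • EuclideanSpace.single 0 1 := by simp [vv]

private lemma vv_smul' (t : ℝ) : vv 0 t = t • EuclideanSpace.single 1 1 := by simp [vv]

private lemma add_cont_linear (ψ : ℝ → ℂ) (hψ : Continuous ψ)
    (hadd : ∀ a b, ψ (a + b) = ψ a + ψ b) (t : ℝ) : ψ t = (t : ℂ) * ψ 1 := by
  have h := ((AddMonoidHom.mk' ψ hadd).toRealLinearMap hψ).map_smul t 1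
  simp only [smul_eq_mul, mul_one] at h
  simp only [Complex.real_smul] at h
  exact h

private lemma oneD (p : ℝ → ℂ) (hp : ContDiff ℝ 1 p) (hpne : ∀ t, p t ≠ 0) (hp0 : p 0 = 1)
    (heq : ∀ s t, p (s + t) * p (s - t) = p s ^ 2 * (p t * p (-t))) :
    ∃ α β : ℂ, ∀ t : ℝ, p t = Complex.exp (α * (t:ℂ) ^ 2 + β * (t:ℂ)) := by
  have hd : Differentiable ℝ p := hp.differentiable one_ne_zero
  set φ : ℝ → ℂ := fun t => deriv p t / p t with hφ
  have hφc : Continuous φ := (hp.continuous_deriv le_rfl).div hp.continuous hpne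
  have key : ∀ s t : ℝ, deriv p (s+t) * p (s-t) + p (s+t) * deriv p (s-t)
      = 2 * p s * deriv p s * (p t * p (-t)) := by
    intro s t
    have h1 : HasDerivAt (fun u : ℝ => p (u + t)) (deriv p (s+t)) s :=
      HasDerivAt.comp_add_const s t (hd (s+t)).hasDerivAt
    have h2 : HasDerivAt (fun u : ℝ => p (u - t)) (deriv p (s-t)) s := by
      simpa [sub_eq_add_neg] using HasDerivAt.comp_add_const s (-t) (hd (s + -t)).hasDerivAt
    have hL : HasDerivAt (fun u => p (u + t) * p (u - t)) _ s := h1.mul h2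
    have hR : HasDerivAt (fun s => p s ^ 2 * (p t * p (-t)))
        (2 * p s * deriv p s * (p t * p (-t))) s := by
      have h3 : HasDerivAt (fun s => p s ^ 2) (deriv p s * p s + p s * deriv p s) s := by
        have : HasDerivAt (fun s => p s * p s) _ s := ((hd s).hasDerivAt.mul (hd s).hasDerivAt)
        convert this using 2
        ring
      have : HasDerivAt (fun s => p s ^ 2 * (p t * p (-t))) _ s := h3.mul_const (p t * p (-t))
      convert this using 1
      ring
    have hfe : (fun s => p (s+t) * p (s-t)) = (fun s => p s ^ 2 * (p t * p (-t))) :=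
      funext fun s => heq s t
    rw [hfe] at hL
    exact hL.unique hR
  have hmid : ∀ s t : ℝ, φ (s+t) + φ (s-t) = 2 * φ s := by
    intro s t
    have hk := key s t
    have he := heq s t
    have hne1 := hpne (s+t); have hne2 := hpne (s-t); have hne3 := hpne s
    simp only [hφ]
    field_simp
    linear_combination p s * hk - 2 * deriv p s * he
  have haff : ∀ t : ℝ, φ t = φ 0 + (t:ℂ) * (φ 1 - φ 0) := by
    have hadd : ∀ a b : ℝ, ((fun u => φ u - φ 0) (a+b)) = (fun u => φ u - φ 0) a + (fun u => φ u - φ 0) b := by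
      intro a b
      have h1 := hmid ((a+b)/2) ((a-b)/2)
      rw [show (a+b)/2 + (a-b)/2 = a by ring, show (a+b)/2 - (a-b)/2 = b by ring] at h1
      have h2 := hmid ((a+b)/2) ((a+b)/2)
      rw [show (a+b)/2 + (a+b)/2 = a+b by ring, show (a+b)/2 - (a+b)/2 = 0 by ring] at h2
      simp only
      linear_combination h2 - h1
    intro t
    have := add_cont_linear (fun u => φ u - φ 0) (hφc.sub continuous_const) hadd t
    linear_combination this
  refine ⟨(φ 1 - φ 0)/2, φ 0, ?_⟩
  set α : ℂ := (φ 1 - φ 0)/2 with hα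
  set β : ℂ := φ 0 with hβ
  have hg : ∀ t : ℝ, HasDerivAt (fun t : ℝ => p t * Complex.exp (-(α * (t:ℂ)^2 + β * t))) 0 t := by
    intro t
    have hin : HasDerivAt (fun t : ℝ => -(α * (t:ℂ)^2 + β * (t:ℂ))) (-(φ t)) t := by
      have hc : HasDerivAt (fun z : ℂ => -(α * z^2 + β * z)) (-(2*α*(t:ℂ) + β)) (t:ℂ) := by
        have : HasDerivAt (fun z : ℂ => -(α * z^2 + β * z)) _ (t:ℂ) := (((hasDerivAt_pow 2 ((t:ℂ))).const_mul α).add ((hasDerivAt_id ((t:ℂ))).const_mul β)).neg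
        convert this using 1
        simp
        ring
      have := hc.comp_ofReal
      convert this using 1
      rw [haff t]
      push_cast [hα, hβ]
      ring
    have hexp := hin.cexp
    have : HasDerivAt (fun t : ℝ => p t * Complex.exp (-(α * (t:ℂ)^2 + β * t))) _ t :=
      (hd t).hasDerivAt.mul hexp
    convert this using 1
    have hpd : deriv p t = φ t * p t := (div_mul_cancel₀ _ (hpne t)).symm
    rw [hpd]
    ring
  have hconst : ∀ t : ℝ, p t * Complex.exp (-(α * (t:ℂ)^2 + β * t)) = 1 := by
    intro t
    have := is_const_of_deriv_eq_zero (f := fun t : ℝ => p t * Complex.exp (-(α * (t:ℂ)^2 + β * t)))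
      (fun s => (hg s).differentiableAt) (fun s => (hg s).deriv) t 0
    simpa [hp0] using this
  intro t
  have h := hconst t
  have e1 : Complex.exp (-(α*(t:ℂ)^2+β*t)) * Complex.exp (α*(t:ℂ)^2+β*t) = 1 := by
    rw [← Complex.exp_add, neg_add_cancel, Complex.exp_zero]
  calc p t = p t * (Complex.exp (-(α*(t:ℂ)^2+β*t)) * Complex.exp (α*(t:ℂ)^2+β*t)) := by
        rw [e1, mul_one]
    _ = (p t * Complex.exp (-(α*(t:ℂ)^2+β*t))) * Complex.exp (α*(t:ℂ)^2+β*t) := by ring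
    _ = Complex.exp (α*(t:ℂ)^2+β*t) := by rw [h, one_mul]


/-- a nowhere-vanishing `C²` solution `f : ℝ² → ℂ` of the multiplicative
functional equation `f(x)f(y) = f(w)f(z)` on admissible quadruples is of the form
`f(x) = exp(a|x|² + b·x + c)`. -/
theorem multiplicative_functional_equation_gaussian (f : R2 → ℂ) (hf : ContDiff ℝ 2 f)
    (hne : ∀ x : R2, f x ≠ 0)
    (hfun : ∀ x y w z : R2, x + y = w + z → ‖x‖ ^ 2 + ‖y‖ ^ 2 = ‖w‖ ^ 2 + ‖z‖ ^ 2 →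
      f x * f y = f w * f z) :
    ∃ (a c : ℂ) (b : Fin 2 → ℂ), ∀ x : R2,
      f x = Complex.exp (a * ((‖x‖ ^ 2 : ℝ) : ℂ) + (∑ i, b i * ((x i : ℝ) : ℂ)) + c) := by
  have hA : ∀ a b : ℝ, f (vv a b) * f 0 = f (vv a 0) * f (vv 0 b) := by
    intro a b
    refine hfun (vv a b) 0 (vv a 0) (vv 0 b) ?_ ?_
    · rw [add_zero, vadd]; norm_num
    · simp only [vnorm, norm_zero]; ring
  have hB : ∀ s t : ℝ, f (vv (s+t) 0) * f (vv (s-t) 0) = f (vv s t) * f (vv s (-t)) := by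
    intro s t
    refine hfun _ _ _ _ ?_ ?_
    · rw [vadd, vadd]; congr 1 <;> ring
    · simp only [vnorm]; ring
  have hC : ∀ s t : ℝ, f (vv 0 (s+t)) * f (vv 0 (s-t)) = f (vv t s) * f (vv (-t) s) := by
    intro s t
    refine hfun _ _ _ _ ?_ ?_
    · rw [vadd, vadd]; congr 1 <;> ring
    · simp only [vnorm]; ring
  have hD : ∀ t : ℝ, f (vv t 0) * f (vv (-t) 0) = f (vv 0 t) * f (vv 0 (-t)) := by
    intro t
    refine hfun _ _ _ _ ?_ ?_
    · rw [vadd, vadd]; congr 1 <;> ring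
    · simp only [vnorm]; ring
  -- product identities at f-level
  have hP : ∀ s t : ℝ, f (vv (s+t) 0) * f (vv (s-t) 0) * (f 0 * f 0)
      = f (vv s 0) * f (vv s 0) * (f (vv t 0) * f (vv (-t) 0)) := by
    intro s t
    linear_combination (f 0 * f 0) * hB s t + (f (vv s (-t)) * f 0) * hA s t
      + (f (vv s 0) * f (vv 0 t)) * hA s (-t) - (f (vv s 0) * f (vv s 0)) * hD t
  have hQ : ∀ s t : ℝ, f (vv 0 (s+t)) * f (vv 0 (s-t)) * (f 0 * f 0)
      = f (vv 0 s) * f (vv 0 s) * (f (vv 0 t) * f (vv 0 (-t))) := by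
    intro s t
    linear_combination (f 0 * f 0) * hC s t + (f (vv (-t) s) * f 0) * hA t s
      + (f (vv 0 s) * f (vv t 0)) * hA (-t) s + (f (vv 0 s) * f (vv 0 s)) * hD t
  -- 1-D reductions
  have hsm0 : ContDiff ℝ 1 (fun t : ℝ => vv t 0) := by
    simp only [vv_smul]
    exact contDiff_id.smul contDiff_const
  have hsm1 : ContDiff ℝ 1 (fun t : ℝ => vv 0 t) := by
    simp only [vv_smul']
    exact contDiff_id.smul contDiff_const
  obtain ⟨α₁, β₁, hp⟩ := oneD (fun t => f (vv t 0) / f 0)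
    (((hf.of_le one_le_two).comp hsm0).div_const _)
    (fun t => div_ne_zero (hne _) (hne 0))
    (by simp [vv_zero, div_self (hne 0)])
    (by
      intro s t
      have h := hP s t
      have h0 := hne 0
      field_simp
      linear_combination h)
  obtain ⟨α₂, β₂, hq⟩ := oneD (fun t => f (vv 0 t) / f 0)
    (((hf.of_le one_le_two).comp hsm1).div_const _)
    (fun t => div_ne_zero (hne _) (hne 0))
    (by simp [vv_zero, div_self (hne 0)])
    (by
      intro s t
      have h := hQ s t
      have h0 := hne 0
      field_simp
      linear_combination h)
  -- equality of quadratic coefficients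
  have hEt : ∀ t : ℝ, Complex.exp (2*(α₁-α₂)*((t:ℂ)^2)) = 1 := by
    intro t
    have hd := hD t
    have h1 := hp t; have h2 := hp (-t); have h3 := hq t; have h4 := hq (-t)
    have e1 : f (vv t 0) = Complex.exp (α₁*(t:ℂ)^2+β₁*t) * f 0 := by
      rw [← h1, div_mul_cancel₀ _ (hne 0)]
    have e2 : f (vv (-t) 0) = Complex.exp (α₁*(t:ℂ)^2-β₁*t) * f 0 := by
      rw [show (α₁*(t:ℂ)^2-β₁*t) = α₁*((-t:ℝ):ℂ)^2+β₁*((-t:ℝ):ℂ) by push_cast; ring, ← h2,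
        div_mul_cancel₀ _ (hne 0)]
    have e3 : f (vv 0 t) = Complex.exp (α₂*(t:ℂ)^2+β₂*t) * f 0 := by
      rw [← h3, div_mul_cancel₀ _ (hne 0)]
    have e4 : f (vv 0 (-t)) = Complex.exp (α₂*(t:ℂ)^2-β₂*t) * f 0 := by
      rw [show (α₂*(t:ℂ)^2-β₂*t) = α₂*((-t:ℝ):ℂ)^2+β₂*((-t:ℝ):ℂ) by push_cast; ring, ← h4,
        div_mul_cancel₀ _ (hne 0)]
    rw [e1, e2, e3, e4] at hd
    have h5 : Complex.exp (2*α₁*(t:ℂ)^2) = Complex.exp (2*α₂*(t:ℂ)^2) := by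
      have l1 : Complex.exp (α₁*(t:ℂ)^2+β₁*t) * Complex.exp (α₁*(t:ℂ)^2-β₁*t)
          = Complex.exp (2*α₁*(t:ℂ)^2) := by
        rw [← Complex.exp_add]; ring_nf
      have l2 : Complex.exp (α₂*(t:ℂ)^2+β₂*t) * Complex.exp (α₂*(t:ℂ)^2-β₂*t)
          = Complex.exp (2*α₂*(t:ℂ)^2) := by
        rw [← Complex.exp_add]; ring_nf
      have h0 := hne 0
      have := mul_right_cancel₀ (mul_ne_zero h0 h0) (by linear_combination hd :
        (Complex.exp (α₁*(t:ℂ)^2+β₁*t) * Complex.exp (α₁*(t:ℂ)^2-β₁*t)) * (f 0 * f 0)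
        = (Complex.exp (α₂*(t:ℂ)^2+β₂*t) * Complex.exp (α₂*(t:ℂ)^2-β₂*t)) * (f 0 * f 0))
      rw [← l1, ← l2, this]
    rw [show 2*(α₁-α₂)*((t:ℂ)^2) = 2*α₁*(t:ℂ)^2 - 2*α₂*(t:ℂ)^2 by ring, Complex.exp_sub, h5,
      div_self (Complex.exp_ne_zero _)]
  have hEs : ∀ s : ℝ, Complex.exp (2*(α₁-α₂)*(s:ℂ)) = 1 := by
    have hpos : ∀ s : ℝ, 0 ≤ s → Complex.exp (2*(α₁-α₂)*(s:ℂ)) = 1 := by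
      intro s hs
      have := hEt (Real.sqrt s)
      rw [show ((Real.sqrt s : ℝ):ℂ)^2 = ((Real.sqrt s ^ 2 : ℝ) : ℂ) by push_cast; ring,
        Real.sq_sqrt hs] at this
      exact this
    intro s
    rcases le_or_gt 0 s with h | h
    · exact hpos s h
    · have h1 := hpos (-s) (by linarith)
      have h2 : Complex.exp (2*(α₁-α₂)*(s:ℂ)) * Complex.exp (2*(α₁-α₂)*((-s:ℝ):ℂ)) = 1 := by
        rw [← Complex.exp_add]
        push_cast
        ring_nf
        exact Complex.exp_zero
      rw [h1, mul_one] at h2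
      exact h2
  have hα : α₁ = α₂ := by
    have hder : HasDerivAt (fun s : ℝ => Complex.exp (2*(α₁-α₂)*(s:ℂ))) (2*(α₁-α₂)) 0 := by
      have hc : HasDerivAt (fun z : ℂ => 2*(α₁-α₂)*z) (2*(α₁-α₂)) ((0:ℝ):ℂ) := by
        simpa using (hasDerivAt_id ((0:ℝ):ℂ)).const_mul (2*(α₁-α₂))
      have := (hc.comp_ofReal).cexp
      simpa using this
    have hfe : (fun s : ℝ => Complex.exp (2*(α₁-α₂)*(s:ℂ))) = fun _ => 1 := funext hEs
    rw [hfe] at hder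
    have := hder.unique (hasDerivAt_const 0 1)
    linear_combination this / 2
  refine ⟨α₁, Complex.log (f 0), ![β₁, β₂], ?_⟩
  intro x
  have hx := hA (x 0) (x 1)
  rw [vvx] at hx
  have hPx : f (vv (x 0) 0) = Complex.exp (α₁ * ((x 0 : ℝ):ℂ)^2 + β₁ * ((x 0 : ℝ):ℂ)) * f 0 := by
    rw [← hp (x 0), div_mul_cancel₀ _ (hne 0)]
  have hQx : f (vv 0 (x 1)) = Complex.exp (α₂ * ((x 1 : ℝ):ℂ)^2 + β₂ * ((x 1 : ℝ):ℂ)) * f 0 := by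
    rw [← hq (x 1), div_mul_cancel₀ _ (hne 0)]
  have hfx : f x = Complex.exp (α₁ * ((x 0 : ℝ):ℂ)^2 + β₁ * ((x 0 : ℝ):ℂ))
      * Complex.exp (α₂ * ((x 1 : ℝ):ℂ)^2 + β₂ * ((x 1 : ℝ):ℂ)) * f 0 :=
    mul_right_cancel₀ (hne 0) (by rw [hx, hPx, hQx]; ring)
  rw [hfx]
  conv_rhs => rw [Complex.exp_add, Complex.exp_add, Complex.exp_log (hne 0)]
  congr 1
  rw [← Complex.exp_add, ← Complex.exp_add]
  congr 1
  rw [← hα, Fin.sum_univ_two]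
  simp only [Matrix.cons_val_zero, Matrix.cons_val_one, Matrix.head_cons]
  rw [normsq x]
  push_cast
  ring


end
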